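/- arXiv:0904.3902 — 3 statements merged into one kernel-verified Lean document; each statement's English description precedes it below -/
import Mathlib

section
/- Let 1 → S₃ → G' → G → 1 be a short exact sequence of groups with G finite, and let α, β be commuting elements of G. Then the number of pairs (a,b) ∈ G' × G' with q(a) = α, q(b) = β, and ab = ba is 18. -/
local notation "P3" => Equiv.Perm (Fin 3)

lemma s9_class : ∀ a b : P3,
    (a * a = 1 ∧ a ≠ 1 ∧ b * (b * b) = 1 ∧ b ≠ 1 ∧ a * b * a = b⁻¹) →
    ∃ k : P3, a = k * (Equiv.swap 0 1) * k⁻¹ ∧ b = k * (finRotate 3) * k⁻¹ := by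
  decide

lemma s9_cover : ∀ x : P3, x = 1 ∨ x = Equiv.swap 0 1 ∨ x = finRotate 3 ∨
    x = finRotate 3 * finRotate 3 ∨ x = Equiv.swap 0 1 * finRotate 3 ∨
    x = Equiv.swap 0 1 * (finRotate 3 * finRotate 3) := by decide

lemma s9_inner (f : P3 → P3) (hom : ∀ x y, f (x * y) = f x * f y)
    (inj : Function.Injective f) : ∃ k : P3, ∀ x, f x = k * x * k⁻¹ := by
  set s : P3 := Equiv.swap 0 1 with hs
  set r : P3 := finRotate 3 with hr
  have h1 : f 1 = 1 := by
    have := hom 1 1; rw [one_mul] at this; exact mul_eq_left.mp this.symm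
  have ha2 : f s * f s = 1 := by rw [← hom, (by decide : s * s = 1), h1]
  have hb3 : f r * (f r * f r) = 1 := by
    rw [← hom, ← hom, (by decide : r * (r * r) = 1), h1]
  have hane : f s ≠ 1 := fun h => (by decide : s ≠ (1:P3)) (inj (h.trans h1.symm))
  have hbne : f r ≠ 1 := fun h => (by decide : r ≠ (1:P3)) (inj (h.trans h1.symm))
  have hinv : f r⁻¹ = (f r)⁻¹ := by
    apply eq_inv_of_mul_eq_one_left; rw [← hom]; simp [h1]
  have hrel : f s * f r * f s = (f r)⁻¹ := by
    rw [← hom, ← hom, (by decide : s * r * s = r⁻¹), hinv]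
  obtain ⟨k, hks, hkr⟩ := s9_class (f s) (f r) ⟨ha2, hane, hb3, hbne, hrel⟩
  refine ⟨k, fun x => ?_⟩
  rcases s9_cover x with h | h | h | h | h | h <;> subst h <;>
    simp [hom, h1, ← hs, ← hr, hks, hkr, mul_assoc]

lemma s9_center : ∀ w : P3, (∀ p : P3, p * w = w * p) → w = 1 := by decide

lemma s9_card : Fintype.card {p : P3 × P3 // p.1 * p.2 = p.2 * p.1} = 18 := by decide

lemma s9_comm_iff {H : Type*} [Group H] {a₀ b₀ x y : H}
    (hab : a₀ * b₀ = b₀ * a₀) (hbx : b₀ * x = x * b₀) (hay : a₀ * y = y * a₀) :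
    (a₀ * x) * (b₀ * y) = (b₀ * y) * (a₀ * x) ↔ x * y = y * x := by
  have e1 : (a₀ * x) * (b₀ * y) = (a₀ * b₀) * (x * y) := by
    rw [mul_assoc a₀ x, ← mul_assoc x b₀, ← hbx]; group
  have e2 : (b₀ * y) * (a₀ * x) = (a₀ * b₀) * (y * x) := by
    rw [mul_assoc b₀ y, ← mul_assoc y a₀, ← hay,
      show b₀ * (a₀ * y * x) = (b₀ * a₀) * (y * x) from by group, ← hab]
  rw [e1, e2, mul_left_cancel_iff]

theorem stmt_9 (G' G : Type*) [Group G'] [Group G] [Finite G]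
    (q : G' →* G) (hq : Function.Surjective q)
    (hker : Nonempty (q.ker ≃* Equiv.Perm (Fin 3)))
    (α β : G) (hαβ : α * β = β * α) :
    Nat.card {p : G' × G' // q p.1 = α ∧ q p.2 = β ∧ p.1 * p.2 = p.2 * p.1} = 18 := by
  obtain ⟨e⟩ := hker
  have conj_mem : ∀ (g : G') (x : q.ker), g * ↑x * g⁻¹ ∈ q.ker := by
    intro g x
    have hx : q ↑x = 1 := x.2
    simp [MonoidHom.mem_ker, map_mul, hx]
  -- conjugation by any g is realized by an element of the kernel
  have key : ∀ g : G', ∃ k : q.ker,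
      ∀ x : q.ker, g * ↑x * g⁻¹ = ↑k * ↑x * (↑k : G')⁻¹ := by
    intro g
    set F : P3 → P3 := fun p => e ⟨g * ↑(e.symm p) * g⁻¹, conj_mem g _⟩ with hF
    have hFhom : ∀ p p' : P3, F (p * p') = F p * F p' := by
      intro p p'
      rw [hF]
      simp only
      rw [← map_mul e]
      congr 1
      apply Subtype.ext
      show g * ↑(e.symm (p * p')) * g⁻¹ =
        (g * ↑(e.symm p) * g⁻¹) * (g * ↑(e.symm p') * g⁻¹)
      rw [map_mul e.symm, Subgroup.coe_mul]
      group
    have hFinj : Function.Injective F := by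
      intro p p' h
      have h2 : g * ↑(e.symm p) * g⁻¹ = g * ↑(e.symm p') * g⁻¹ :=
        Subtype.ext_iff.mp (e.injective h)
      have h3 : (↑(e.symm p) : G') = ↑(e.symm p') :=
        mul_left_cancel (mul_right_cancel h2)
      have h4 : e.symm p = e.symm p' := Subtype.ext h3
      exact e.symm.injective h4
    obtain ⟨k₀, hk₀⟩ := s9_inner F hFhom hFinj
    refine ⟨e.symm k₀, fun x => ?_⟩
    have h5 := hk₀ (e x)
    have h6 : F (e x) = e ⟨g * ↑x * g⁻¹, conj_mem g x⟩ := by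
      rw [hF]; simp only [MulEquiv.symm_apply_apply]
    rw [h6] at h5
    have h7 : (⟨g * ↑x * g⁻¹, conj_mem g x⟩ : q.ker) =
        e.symm k₀ * x * (e.symm k₀)⁻¹ := by
      apply e.injective
      rw [map_mul, map_mul, map_inv, MulEquiv.apply_symm_apply]
      exact h5
    have h8 := Subtype.ext_iff.mp h7
    simpa using h8
  -- centralizing lifts of each element of G
  have liftC : ∀ γ : G, ∃ c : G', q c = γ ∧ ∀ x : q.ker, c * ↑x = ↑x * c := by
    intro γ
    obtain ⟨g, hg⟩ := hq γ
    obtain ⟨k, hk⟩ := key g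
    have hk1 : q ↑k = 1 := k.2
    refine ⟨g * (↑k)⁻¹, by simp [map_mul, hg, hk1], ?_⟩
    intro x
    have h5 := hk (k⁻¹ * x * k)
    have hx : (↑(k⁻¹ * x * k) : G') = (↑k)⁻¹ * ↑x * ↑k := rfl
    rw [hx] at h5
    have h6 : g * ((↑k : G')⁻¹ * ↑x * ↑k) * g⁻¹ = ↑x := by rw [h5]; group
    calc g * (↑k)⁻¹ * ↑x
        = (g * ((↑k : G')⁻¹ * ↑x * ↑k) * g⁻¹) * (g * (↑k)⁻¹) := by group
      _ = ↑x * (g * (↑k)⁻¹) := by rw [h6]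
  obtain ⟨a₀, ha₀, haC⟩ := liftC α
  obtain ⟨b₀, hb₀, hbC⟩ := liftC β
  -- a₀ and b₀ commute
  have hab : a₀ * b₀ = b₀ * a₀ := by
    have h7 : β⁻¹ * α⁻¹ * β * α = 1 := by rw [mul_assoc, ← hαβ]; group
    have hmem : b₀⁻¹ * a₀⁻¹ * b₀ * a₀ ∈ q.ker := by
      simp only [MonoidHom.mem_ker, map_mul, map_inv, ha₀, hb₀]
      exact h7
    set z : q.ker := ⟨b₀⁻¹ * a₀⁻¹ * b₀ * a₀, hmem⟩ with hzdef
    have hcent : ∀ x : q.ker, (↑x : G') * ↑z = ↑z * ↑x := by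
      intro x
      have ca : Commute a₀ (↑x : G') := haC x
      have cb : Commute b₀ (↑x : G') := hbC x
      have : Commute (b₀⁻¹ * a₀⁻¹ * b₀ * a₀) (↑x : G') :=
        ((cb.inv_left.mul_left ca.inv_left).mul_left cb).mul_left ca |>.symm
        |>.symm
      exact this.symm
    have hz1 : ∀ p : P3, p * e z = e z * p := by
      intro p
      have hx := hcent (e.symm p)
      have hx2 : e.symm p * z = z * e.symm p := Subtype.ext hx
      calc p * e z = e (e.symm p * z) := by
            rw [map_mul, MulEquiv.apply_symm_apply]
        _ = e (z * e.symm p) := by rw [hx2]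
        _ = e z * p := by rw [map_mul, MulEquiv.apply_symm_apply]
    have hz2 : z = 1 := by
      apply e.injective
      rw [map_one]
      exact s9_center _ hz1
    have hz3 : b₀⁻¹ * a₀⁻¹ * b₀ * a₀ = 1 := Subtype.ext_iff.mp hz2
    calc a₀ * b₀ = a₀ * b₀ * (b₀⁻¹ * a₀⁻¹ * b₀ * a₀) := by rw [hz3, mul_one]
      _ = b₀ * a₀ := by group
  -- memberships
  have memA : ∀ a : G', q a = α → a₀⁻¹ * a ∈ q.ker := by
    intro a h; simp [MonoidHom.mem_ker, map_mul, ha₀, h]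
  have memB : ∀ b : G', q b = β → b₀⁻¹ * b ∈ q.ker := by
    intro b h; simp [MonoidHom.mem_ker, map_mul, hb₀, h]
  have memA' : ∀ x : q.ker, q (a₀ * ↑x) = α := by
    intro x; have hx : q ↑x = 1 := x.2; simp [map_mul, ha₀, hx]
  have memB' : ∀ x : q.ker, q (b₀ * ↑x) = β := by
    intro x; have hx : q ↑x = 1 := x.2; simp [map_mul, hb₀, hx]
  -- the equivalence with commuting pairs in the kernel
  let E1 : {p : G' × G' // q p.1 = α ∧ q p.2 = β ∧ p.1 * p.2 = p.2 * p.1} ≃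
      {p : q.ker × q.ker // p.1 * p.2 = p.2 * p.1} :=
    { toFun := fun p => ⟨(⟨a₀⁻¹ * p.1.1, memA _ p.2.1⟩, ⟨b₀⁻¹ * p.1.2, memB _ p.2.2.1⟩), by
        apply Subtype.ext
        show (a₀⁻¹ * p.1.1) * (b₀⁻¹ * p.1.2) = (b₀⁻¹ * p.1.2) * (a₀⁻¹ * p.1.1)
        apply (s9_comm_iff hab (hbC ⟨a₀⁻¹ * p.1.1, memA _ p.2.1⟩)
          (haC ⟨b₀⁻¹ * p.1.2, memB _ p.2.2.1⟩)).mp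
        show (a₀ * (a₀⁻¹ * p.1.1)) * (b₀ * (b₀⁻¹ * p.1.2)) =
          (b₀ * (b₀⁻¹ * p.1.2)) * (a₀ * (a₀⁻¹ * p.1.1))
        rw [mul_inv_cancel_left, mul_inv_cancel_left]
        exact p.2.2.2⟩
      invFun := fun p => ⟨(a₀ * ↑p.1.1, b₀ * ↑p.1.2), memA' _, memB' _,
        (s9_comm_iff hab (hbC p.1.1) (haC p.1.2)).mpr (Subtype.ext_iff.mp p.2)⟩
      left_inv := fun p => by
        apply Subtype.ext
        apply Prod.ext <;> simp [mul_inv_cancel_left]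
      right_inv := fun p => by
        apply Subtype.ext
        apply Prod.ext <;> apply Subtype.ext <;> simp [inv_mul_cancel_left] }
  let E2 : {p : q.ker × q.ker // p.1 * p.2 = p.2 * p.1} ≃
      {p : P3 × P3 // p.1 * p.2 = p.2 * p.1} :=
    Equiv.subtypeEquiv (Equiv.prodCongr e.toEquiv e.toEquiv) (by
      intro p
      constructor
      · intro h
        show e p.1 * e p.2 = e p.2 * e p.1
        rw [← map_mul, ← map_mul, h]
      · intro h
        have h' : e p.1 * e p.2 = e p.2 * e p.1 := h
        exact e.injective (by rw [map_mul, map_mul]; exact h'))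
  rw [Nat.card_congr (E1.trans E2), Nat.card_eq_fintype_card]
  exact s9_card
end

section
/- Let q: G' → G be a surjective group homomorphism with kernel isomorphic to Q₈, and let α, β be commuting elements of G. Then |L(α, β, q)| ∈ {0, 8, 16, 24, 40}, where L(α, β, q) = {(a,b) ∈ G' × G' : q(a) = α, q(b) = β, ab = ba}. -/
namespace Stmt10Aux

abbrev Q := QuaternionGroup 2

/-- Candidate endomorphism of `Q` determined by images `A` of `a 1` and `B` of `xa 0`. -/
def F (A B : Q) : Q → Q
  | .a i => A ^ i.val
  | .xa i => A ^ ((-i).val) * B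

set_option maxRecDepth 100000 in
set_option maxHeartbeats 8000000 in
theorem core : ∀ A B : Q,
    (∀ x y : Q, F A B (x*y) = F A B x * F A B y) →
    (∀ x y : Q, F A B x = F A B y → x = y) →
    ∀ A' B' : Q,
    (∀ x y : Q, F A' B' (x*y) = F A' B' x * F A' B' y) →
    (∀ x y : Q, F A' B' x = F A' B' y → x = y) →
    ∀ w : Q,
    (∀ k : Q, F A B (F A' B' k) = F A' B' (F A B (w * k * w⁻¹))) →
    (Finset.univ.filter (fun p : Q × Q => w * p.1 * F A B p.2 = p.2 * F A' B' p.1)).card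
      ∈ ({0,8,16,24,40} : Finset ℕ) := by decide

/-- Any multiplicative self-map of `Q` is determined by the images of the two generators. -/
theorem eq_F (f : Q → Q) (hf : ∀ x y, f (x*y) = f x * f y) :
    ∀ x, f x = F (f (.a 1)) (f (.xa 0)) x := by
  have f1 : f 1 = 1 := by
    have h := hf 1 1
    rw [one_mul] at h
    exact (mul_eq_left.mp h.symm)
  have fpow : ∀ (x : Q) (n : ℕ), f (x ^ n) = f x ^ n := by
    intro x n
    induction n with
    | zero => simpa using f1
    | succ n ih => rw [pow_succ, hf, ih, pow_succ]
  intro x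
  cases x with
  | a i =>
      have hx : (QuaternionGroup.a i : Q) = (QuaternionGroup.a 1 : Q) ^ i.val := by
        rw [QuaternionGroup.a_one_pow]
        congr 1
        simp [ZMod.natCast_val, ZMod.cast_id]
      show f _ = f (.a 1) ^ i.val
      rw [hx, fpow]
  | xa i =>
      have hx : (QuaternionGroup.xa i : Q) =
          QuaternionGroup.a (-i) * QuaternionGroup.xa 0 := by simp
      have hx2 : (QuaternionGroup.a (-i) : Q) = (QuaternionGroup.a 1 : Q) ^ (-i).val := by
        rw [QuaternionGroup.a_one_pow]
        congr 1
        simp [ZMod.natCast_val, ZMod.cast_id]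
      show f _ = f (.a 1) ^ (-i).val * f (.xa 0)
      rw [hx, hf, hx2, fpow]

variable {G' G : Type*} [Group G'] [Group G] (q : G' →* G)

/-- Conjugation by `g` transported along `e` to an automorphism of `Q`. -/
def cA (e : q.ker ≃* Q) (g : G') : Q ≃* Q :=
  (e.symm.trans (MulAut.conjNormal g)).trans e

lemma cA_symm_val (e : q.ker ≃* Q) (g : G') (v : Q) :
    ((e.symm (cA q e g v) : q.ker) : G') = g * ↑(e.symm v) * g⁻¹ := by
  simp [cA]

lemma eqQ_iff (e : q.ker ≃* Q) {x y : Q} :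
    x = y ↔ ((e.symm x : q.ker) : G') = ((e.symm y : q.ker) : G') :=
  ⟨fun h => by rw [h], fun h => e.symm.injective (Subtype.ext h)⟩

lemma key_iff {M : Type*} [Group M] (a b u v : M) :
    (a⁻¹*b⁻¹*a*b) * u * (a*v*a⁻¹) = v * (b*u*b⁻¹) ↔
    (a*(b*u*b⁻¹)) * (b*(a*v*a⁻¹)) = (b*(a*v*a⁻¹)) * (a*(b*u*b⁻¹)) := by
  constructor <;> intro h
  · have h1 : (a*(b*u*b⁻¹)) * (b*(a*v*a⁻¹))
        = (b*a) * ((a⁻¹*b⁻¹*a*b) * u * (a*v*a⁻¹)) := by group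
    rw [h1, h]; group
  · have h1 : (a⁻¹*b⁻¹*a*b) * u * (a*v*a⁻¹)
        = (b*a)⁻¹ * ((a*(b*u*b⁻¹)) * (b*(a*v*a⁻¹))) := by group
    rw [h1, h]; group

lemma cA_constraint (e : q.ker ≃* Q) (a0 b0 : G') (hz : a0⁻¹*b0⁻¹*a0*b0 ∈ q.ker) (k : Q) :
    cA q e a0 (cA q e b0 k)
      = cA q e b0 (cA q e a0 (e ⟨_, hz⟩ * k * (e ⟨_, hz⟩)⁻¹)) := by
  rw [eqQ_iff q e]
  simp only [cA_symm_val, map_mul, map_inv, Subgroup.coe_mul, InvMemClass.coe_inv,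
    MulEquiv.symm_apply_apply]
  group

lemma cond_iff (e : q.ker ≃* Q) (a0 b0 : G') (hz : a0⁻¹*b0⁻¹*a0*b0 ∈ q.ker) (u v : Q) :
    (e ⟨_, hz⟩ * u * cA q e a0 v = v * cA q e b0 u) ↔
    (a0 * (b0 * ↑(e.symm u) * b0⁻¹)) * (b0 * (a0 * ↑(e.symm v) * a0⁻¹))
      = (b0 * (a0 * ↑(e.symm v) * a0⁻¹)) * (a0 * (b0 * ↑(e.symm u) * b0⁻¹)) := by
  rw [eqQ_iff q e]
  simp only [cA_symm_val, map_mul, Subgroup.coe_mul, MulEquiv.symm_apply_apply]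
  exact key_iff a0 b0 _ _

end Stmt10Aux

open Stmt10Aux in
theorem stmt_10 (G' G : Type*) [Group G'] [Group G]
    (q : G' →* G) (hq : Function.Surjective q)
    (hker : Nonempty (q.ker ≃* QuaternionGroup 2))
    (α β : G) (hαβ : α * β = β * α) :
    Nat.card {p : G' × G' // q p.1 = α ∧ q p.2 = β ∧ p.1 * p.2 = p.2 * p.1} ∈
      ({0, 8, 16, 24, 40} : Set ℕ) := by
  classical
  obtain ⟨e⟩ := hker
  obtain ⟨a0, ha⟩ := hq α
  obtain ⟨b0, hb⟩ := hq β
  have hz : a0⁻¹ * b0⁻¹ * a0 * b0 ∈ q.ker := by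
    rw [MonoidHom.mem_ker]
    simp [map_mul, ha, hb, mul_assoc, hαβ]
  have hkq : ∀ k : q.ker, q ↑k = 1 := fun k => MonoidHom.mem_ker.mp k.2
  set w : QuaternionGroup 2 := e ⟨_, hz⟩ with hw
  -- the equivalence between commuting-lift pairs and solution pairs in Q₈
  have E : {p : QuaternionGroup 2 × QuaternionGroup 2 //
        w * p.1 * cA q e a0 p.2 = p.2 * cA q e b0 p.1} ≃
      {p : G' × G' // q p.1 = α ∧ q p.2 = β ∧ p.1 * p.2 = p.2 * p.1} := by
    refine
      { toFun := fun x => ⟨(a0 * (b0 * ↑(e.symm x.1.1) * b0⁻¹),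
          b0 * (a0 * ↑(e.symm x.1.2) * a0⁻¹)), ?_, ?_, ?_⟩
        invFun := fun y => ⟨(e ⟨b0⁻¹ * (a0⁻¹ * y.1.1) * b0, ?_⟩,
          e ⟨a0⁻¹ * (b0⁻¹ * y.1.2) * a0, ?_⟩), ?_⟩
        left_inv := ?_
        right_inv := ?_ }
    · simp [ha, hb, hkq]
    · simp [ha, hb, hkq]
    · exact (cond_iff q e a0 b0 hz x.1.1 x.1.2).mp x.2
    · rw [MonoidHom.mem_ker]; simp [ha, hb, y.2.1]
    · rw [MonoidHom.mem_ker]; simp [ha, hb, y.2.2.1]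
    · rw [cond_iff q e a0 b0 hz]
      simp only [MulEquiv.symm_apply_apply]
      have h1 : a0 * (b0 * (b0⁻¹ * (a0⁻¹ * y.1.1) * b0) * b0⁻¹) = y.1.1 := by group
      have h2 : b0 * (a0 * (a0⁻¹ * (b0⁻¹ * y.1.2) * a0) * a0⁻¹) = y.1.2 := by group
      rw [h1, h2]
      exact y.2.2.2
    · intro x
      apply Subtype.ext
      apply Prod.ext <;>
        · simp only
          rw [eqQ_iff q e]
          simp only [MulEquiv.symm_apply_apply]
          group
    · intro y
      apply Subtype.ext
      apply Prod.ext <;>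
        · simp only [MulEquiv.symm_apply_apply]
          group
  rw [← Nat.card_congr E, Nat.card_eq_fintype_card, Fintype.card_subtype]
  set A := cA q e a0 (.a 1) with hAdef
  set B := cA q e a0 (.xa 0) with hBdef
  set A' := cA q e b0 (.a 1) with hA'def
  set B' := cA q e b0 (.xa 0) with hB'def
  have hA : ∀ x, cA q e a0 x = F A B x := eq_F _ (map_mul _)
  have hB : ∀ x, cA q e b0 x = F A' B' x := eq_F _ (map_mul _)
  have hmem := core A B
    (fun x y => by rw [← hA, ← hA, ← hA, map_mul])
    (fun x y h => by rw [← hA, ← hA] at h; exact (cA q e a0).injective h)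
    A' B'
    (fun x y => by rw [← hB, ← hB, ← hB, map_mul])
    (fun x y h => by rw [← hB, ← hB] at h; exact (cA q e b0).injective h)
    w
    (fun k => by rw [← hA, ← hB, ← hA, ← hB]; exact cA_constraint q e a0 b0 hz k)
  have hfil : Finset.filter
        (fun p : QuaternionGroup 2 × QuaternionGroup 2 =>
          w * p.1 * cA q e a0 p.2 = p.2 * cA q e b0 p.1) Finset.univ
      = Finset.filter (fun p => w * p.1 * F A B p.2 = p.2 * F A' B' p.1) Finset.univ := by
    apply Finset.filter_congr
    intro p _
    rw [hA, hB]
  rw [show (Finset.filter (fun x : QuaternionGroup 2 × QuaternionGroup 2 =>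
      w * x.1 * (cA q e a0) x.2 = x.2 * (cA q e b0) x.1) Finset.univ).card
    = (Finset.filter (fun p => w * p.1 * F A B p.2 = p.2 * F A' B' p.1) Finset.univ).card
    from congrArg Finset.card hfil]
  simp only [Finset.mem_insert, Finset.mem_singleton] at hmem
  simpa [Set.mem_insert_iff, Set.mem_singleton_iff] using hmem
end

section
/- Let G' be a group with a normal subgroup N isomorphic to Q₈, and let a, b be commuting elements of G'. Then the number of pairs (γ₁, γ₂) ∈ N × N such that aγ₁ commutes with bγ₂ is 8, 16, 24, or 40. -/
namespace Stmt11Aux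

abbrev Q := QuaternionGroup 2

/-- extension of a pair of generator images to a function on `Q`. -/
def E (p q : Q) : Q → Q
  | .a i => p ^ i.val
  | .xa i => q * p ^ i.val

lemma key : ∀ p q p' q' : Q,
    (∀ x y, E p q (x * y) = E p q x * E p q y) →
    (∀ x y, E p' q' (x * y) = E p' q' x * E p' q' y) →
    (∀ x, E p q (E p' q' x) = E p' q' (E p q x)) →
    ((Finset.univ.filter
      (fun z : Q × Q => E p' q' z.1 * z.2 = E p q z.2 * z.1)).card = 8 ∨
     (Finset.univ.filter
      (fun z : Q × Q => E p' q' z.1 * z.2 = E p q z.2 * z.1)).card = 16 ∨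
     (Finset.univ.filter
      (fun z : Q × Q => E p' q' z.1 * z.2 = E p q z.2 * z.1)).card = 24 ∨
     (Finset.univ.filter
      (fun z : Q × Q => E p' q' z.1 * z.2 = E p q z.2 * z.1)).card = 40) := by
  decide

lemma hom_eq_E (f : Q → Q) (hf : ∀ x y, f (x * y) = f x * f y) :
    ∀ x, f x = E (f (.a 1)) (f (.xa 0)) x := by
  have h1 : f 1 = 1 := by
    have := hf 1 1
    rw [one_mul] at this
    exact (mul_eq_left.mp this.symm)
  have hpow : ∀ x : Q, ∀ k : ℕ, f (x ^ k) = f x ^ k := by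
    intro x k
    induction k with
    | zero => simpa using h1
    | succ n ih => rw [pow_succ, hf, ih, pow_succ]
  rintro (i | i)
  · have hi : (QuaternionGroup.a i : Q) = (QuaternionGroup.a 1) ^ i.val := by
      rw [QuaternionGroup.a_one_pow, ZMod.natCast_val, ZMod.cast_id]
    show f (QuaternionGroup.a i) = f (QuaternionGroup.a 1) ^ i.val
    rw [hi, hpow]
  · have hi : (QuaternionGroup.xa i : Q) = (QuaternionGroup.xa 0) * QuaternionGroup.a i := by
      rw [QuaternionGroup.xa_mul_a, zero_add]
    have hi2 : (QuaternionGroup.a i : Q) = (QuaternionGroup.a 1) ^ i.val := by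
      rw [QuaternionGroup.a_one_pow, ZMod.natCast_val, ZMod.cast_id]
    show f (QuaternionGroup.xa i) = f (QuaternionGroup.xa 0) * f (QuaternionGroup.a 1) ^ i.val
    rw [hi, hf, hi2, hpow]

end Stmt11Aux

open Stmt11Aux in
theorem stmt_11 (G' : Type*) [Group G'] (N : Subgroup G') [N.Normal]
    (hN : Nonempty (N ≃* QuaternionGroup 2))
    (a b : G') (hab : a * b = b * a) :
    Nat.card {p : N × N //
        (a * (p.1 : G')) * (b * (p.2 : G')) = (b * (p.2 : G')) * (a * (p.1 : G'))} ∈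
      ({8, 16, 24, 40} : Set ℕ) := by
  obtain ⟨e⟩ := hN
  have hNnorm : N.Normal := inferInstance
  -- conjugation maps on N
  have memA : ∀ n : N, a⁻¹ * (n : G') * a ∈ N := by
    intro n
    simpa using hNnorm.conj_mem (n : G') n.2 a⁻¹
  have memB : ∀ n : N, b⁻¹ * (n : G') * b ∈ N := by
    intro n
    simpa using hNnorm.conj_mem (n : G') n.2 b⁻¹
  set cA : N → N := fun n => ⟨a⁻¹ * (n : G') * a, memA n⟩ with hcA
  set cB : N → N := fun n => ⟨b⁻¹ * (n : G') * b, memB n⟩ with hcB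
  set α : Q → Q := fun x => e (cA (e.symm x)) with hα
  set β : Q → Q := fun x => e (cB (e.symm x)) with hβ
  have hcAmul : ∀ m n : N, cA (m * n) = cA m * cA n := by
    intro m n
    apply Subtype.ext
    simp only [hcA, Subgroup.coe_mul]
    group
  have hcBmul : ∀ m n : N, cB (m * n) = cB m * cB n := by
    intro m n
    apply Subtype.ext
    simp only [hcB, Subgroup.coe_mul]
    group
  have hαhom : ∀ x y, α (x * y) = α x * α y := by
    intro x y
    simp only [hα, map_mul, hcAmul]
  have hβhom : ∀ x y, β (x * y) = β x * β y := by
    intro x y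
    simp only [hβ, map_mul, hcBmul]
  have hcomm : ∀ x, α (β x) = β (α x) := by
    intro x
    simp only [hα, hβ, MulEquiv.symm_apply_apply]
    congr 1
    apply Subtype.ext
    simp only [hcA, hcB]
    have : a⁻¹ * (b⁻¹ * ((e.symm x : N) : G') * b) * a
        = b⁻¹ * (a⁻¹ * ((e.symm x : N) : G') * a) * b := by
      have h' : b⁻¹ * a⁻¹ = a⁻¹ * b⁻¹ := by
        rw [← mul_inv_rev, hab, mul_inv_rev]
      calc a⁻¹ * (b⁻¹ * ((e.symm x : N) : G') * b) * a
          = (a⁻¹ * b⁻¹) * ((e.symm x : N) : G') * (b * a) := by group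
        _ = (b⁻¹ * a⁻¹) * ((e.symm x : N) : G') * (a * b) := by rw [h', hab]
        _ = b⁻¹ * (a⁻¹ * ((e.symm x : N) : G') * a) * b := by group
    exact this
  -- the condition transfers
  have hcond : ∀ p : N × N,
      ((a * (p.1 : G')) * (b * (p.2 : G')) = (b * (p.2 : G')) * (a * (p.1 : G')))
      ↔ (β (e p.1) * (e p.2) = α (e p.2) * (e p.1)) := by
    intro p
    have h1 : (a * (p.1 : G')) * (b * (p.2 : G'))
        = (a * b) * ((b⁻¹ * (p.1 : G') * b) * (p.2 : G')) := by group
    have h2 : (b * (p.2 : G')) * (a * (p.1 : G'))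
        = (a * b) * ((a⁻¹ * (p.2 : G') * a) * (p.1 : G')) := by
      rw [hab]; group
    rw [h1, h2, mul_right_inj]
    constructor
    · intro h
      have hN' : cB p.1 * p.2 = cA p.2 * p.1 := by
        apply Subtype.ext
        simpa [hcA, hcB] using h
      have := congrArg e hN'
      simpa [hα, hβ, map_mul, MulEquiv.symm_apply_apply] using this
    · intro h
      have hN' : cB p.1 * p.2 = cA p.2 * p.1 := by
        apply e.injective
        simpa [hα, hβ, map_mul, MulEquiv.symm_apply_apply] using h
      have := congrArg (Subtype.val) hN'
      simpa [hcA, hcB] using this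
  -- transfer the cardinality
  have hcard : Nat.card {p : N × N //
      (a * (p.1 : G')) * (b * (p.2 : G')) = (b * (p.2 : G')) * (a * (p.1 : G'))}
      = (Finset.univ.filter (fun z : Q × Q => β z.1 * z.2 = α z.2 * z.1)).card := by
    have hequiv : {p : N × N //
        (a * (p.1 : G')) * (b * (p.2 : G')) = (b * (p.2 : G')) * (a * (p.1 : G'))}
        ≃ {z : Q × Q // β z.1 * z.2 = α z.2 * z.1} := by
      refine Equiv.subtypeEquiv (e.toEquiv.prodCongr e.toEquiv) ?_
      intro p
      simpa using hcond p
    rw [Nat.card_congr hequiv, Nat.card_eq_fintype_card, Fintype.card_subtype]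
  rw [hcard]
  -- identify α, β with E-functions
  have hαE := hom_eq_E α hαhom
  have hβE := hom_eq_E β hβhom
  have hαβE : ∀ x, E (α (.a 1)) (α (.xa 0)) (E (β (.a 1)) (β (.xa 0)) x)
      = E (β (.a 1)) (β (.xa 0)) (E (α (.a 1)) (α (.xa 0)) x) := by
    intro x
    rw [← hαE, ← hβE, ← hαE, ← hβE, hcomm]
  have hmem := key (α (.a 1)) (α (.xa 0)) (β (.a 1)) (β (.xa 0))
    (fun x y => by rw [← hαE, ← hαE, ← hαE, hαhom])
    (fun x y => by rw [← hβE, ← hβE, ← hβE, hβhom])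
    hαβE
  have hfil : (Finset.univ.filter (fun z : Q × Q => β z.1 * z.2 = α z.2 * z.1))
      = Finset.univ.filter (fun z : Q × Q => E (β (.a 1)) (β (.xa 0)) z.1 * z.2
          = E (α (.a 1)) (α (.xa 0)) z.2 * z.1) := by
    apply Finset.filter_congr
    intro z _
    rw [hαE, hβE]
  rw [hfil]
  simp only [Set.mem_insert_iff, Set.mem_singleton_iff]
  exact hmem
end
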